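/- Let σ be a complex number that is not half an integer, K a positive integer, and let λ, μ be partitions with ℓ(λ) ≤ K and ℓ(μ) ≤ K. Define v_σ(z) = 1/(Γ(z+1+σ)²Γ(z+1−σ)²), and set x_i = λ_i − i + K − σ, x_{K+i} = μ_i − i + K + σ for 1 ≤ i ≤ K. Then the bare conformal block coefficient B_{λ,μ}([];σ) := ∏_{(i,j)∈λ} 1/(h_λ(i,j)²(λ'_j+μ_i−i−j+1+2σ)²) · ∏_{(i,j)∈μ} 1/(h_μ(i,j)²(λ_i+μ'_j−i−j+1−2σ)²) equals Γ(2σ)^{2K} Γ(1−2σ)^{2K} · ∏_{1≤i<j≤2K}(x_i−x_j)² · ∏_{i=1}^{2K} v_σ(x_i). -/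

import Mathlib

open Finset

open Finset

namespace BCaux

lemma dc_eq_Icc {K : ℕ} {S : Finset ℕ} (hS : S ⊆ Icc 1 K)
    (hdc : ∀ a ∈ S, ∀ b, 1 ≤ b → b ≤ a → b ∈ S) : S = Icc 1 S.card := by
  apply Finset.ext
  intro x
  simp only [mem_Icc]
  constructor
  · intro hx
    have h1 : 1 ≤ x := (mem_Icc.mp (hS hx)).1
    refine ⟨h1, ?_⟩
    have hsub : Icc 1 x ⊆ S := by
      intro b hb
      exact hdc x hx b (mem_Icc.mp hb).1 (mem_Icc.mp hb).2
    calc x = (Icc 1 x).card := by rw [Nat.card_Icc]; omega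
    _ ≤ S.card := card_le_card hsub
  · rintro ⟨h1, h2⟩
    by_contra hx
    have hsub : S ⊆ Icc 1 (x - 1) := by
      intro a ha
      have ha1 := mem_Icc.mp (hS ha)
      rcases lt_or_ge a x with h | h
      · exact mem_Icc.mpr ⟨ha1.1, by omega⟩
      · exact absurd (hdc a ha x h1 h) hx
    have := card_le_card hsub
    rw [Nat.card_Icc] at this
    omega

def conj (K : ℕ) (f : ℕ → ℕ) (j : ℕ) : ℕ := ((Icc 1 K).filter fun t => j ≤ f t).card
def nn (K : ℕ) (f : ℕ → ℕ) (i : ℕ) : ℕ := f i + (K - i)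
def bb (K : ℕ) (f : ℕ → ℕ) (j : ℕ) : ℕ := (K - conj K f j) + (j - 1)

variable {K : ℕ} {f : ℕ → ℕ} (hmono : ∀ i j, 1 ≤ i → i ≤ j → f j ≤ f i)

lemma conj_le (j : ℕ) : conj K f j ≤ K := by
  have h := card_filter_le (Icc 1 K) (fun t => j ≤ f t)
  simpa [conj, Nat.card_Icc] using h

include hmono in
lemma filter_eq (j : ℕ) : ((Icc 1 K).filter fun t => j ≤ f t) = Icc 1 (conj K f j) := by
  apply dc_eq_Icc (filter_subset _ _)
  intro a ha b hb1 hba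
  rw [mem_filter] at ha ⊢
  have ha1 := mem_Icc.mp ha.1
  exact ⟨mem_Icc.mpr ⟨hb1, le_trans hba ha1.2⟩, le_trans ha.2 (hmono b a hb1 hba)⟩

include hmono in
lemma le_conj_iff {i j : ℕ} (hi : i ∈ Icc 1 K) : j ≤ f i ↔ i ≤ conj K f j := by
  have h : i ∈ (Icc 1 K).filter (fun t => j ≤ f t) ↔ i ∈ Icc 1 (conj K f j) := by
    rw [filter_eq hmono]
  simp only [mem_filter, mem_Icc] at h
  have hi' := mem_Icc.mp hi
  constructor
  · intro hj
    exact (h.mp ⟨⟨hi'.1, hi'.2⟩, hj⟩).2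
  · intro hc
    exact (h.mpr ⟨hi'.1, hc⟩).2

include hmono in
lemma bb_lt_nn {i j : ℕ} (hi : i ∈ Icc 1 K) (hj : 1 ≤ j) (hbox : j ≤ f i) :
    bb K f j < nn K f i := by
  have hc := conj_le (K := K) (f := f) j
  have hic : i ≤ conj K f j := (le_conj_iff hmono hi).mp hbox
  have hi' := mem_Icc.mp hi
  unfold bb nn
  omega

include hmono in
lemma nn_lt_bb {i j : ℕ} (hi : i ∈ Icc 1 K) (hj : 1 ≤ j) (hbox : f i < j) :
    nn K f i < bb K f j := by
  have hc := conj_le (K := K) (f := f) j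
  have hic : ¬ (i ≤ conj K f j) := by
    intro h
    exact absurd ((le_conj_iff hmono hi).mpr h) (by omega)
  have hi' := mem_Icc.mp hi
  unfold bb nn
  omega

lemma bb_strictMono {j j' : ℕ} (hj : 1 ≤ j) (hjj : j < j') : bb K f j < bb K f j' := by
  have hcc : conj K f j' ≤ conj K f j := by
    apply card_le_card
    intro t ht
    rw [mem_filter] at ht ⊢
    exact ⟨ht.1, by omega⟩
  have hc := conj_le (K := K) (f := f) j
  have hc' := conj_le (K := K) (f := f) j'
  unfold bb
  omega

include hmono in
lemma nn_strictAnti {i t : ℕ} (hi : 1 ≤ i) (hit : i < t) (ht : t ≤ K) :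
    nn K f t < nn K f i := by
  have := hmono i t hi (le_of_lt hit)
  unfold nn
  omega

include hmono in
lemma bb_ne_nn {t j : ℕ} (ht : t ∈ Icc 1 K) (hj : 1 ≤ j) : bb K f j ≠ nn K f t := by
  rcases le_or_gt j (f t) with h | h
  · exact ne_of_lt (bb_lt_nn hmono ht hj h)
  · exact (ne_of_lt (nn_lt_bb hmono ht hj h)).symm

include hmono in
lemma row {i : ℕ} (hi : i ∈ Icc 1 K) (c : ℂ) :
    (∏ j ∈ Icc 1 (f i), (c - (bb K f j : ℂ))) *
      (∏ t ∈ Icc (i+1) K, (c - (nn K f t : ℂ))) =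
    ∏ v ∈ range (nn K f i), (c - (v : ℂ)) := by
  have hi' := mem_Icc.mp hi
  have hinj1 : ∀ x ∈ Icc 1 (f i), ∀ y ∈ Icc 1 (f i), bb K f x = bb K f y → x = y := by
    intro x hx y hy hxy
    have hx' := mem_Icc.mp hx; have hy' := mem_Icc.mp hy
    by_contra hne
    rcases lt_or_gt_of_ne hne with h | h
    · exact absurd hxy (ne_of_lt (bb_strictMono (K := K) (f := f) hx'.1 h))
    · exact absurd hxy.symm (ne_of_lt (bb_strictMono (K := K) (f := f) hy'.1 h))
  have hinj2 : ∀ x ∈ Icc (i+1) K, ∀ y ∈ Icc (i+1) K, nn K f x = nn K f y → x = y := by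
    intro x hx y hy hxy
    have hx' := mem_Icc.mp hx; have hy' := mem_Icc.mp hy
    by_contra hne
    rcases lt_or_gt_of_ne hne with h | h
    · exact absurd hxy.symm (ne_of_lt (nn_strictAnti hmono (by omega) h hy'.2))
    · exact absurd hxy (ne_of_lt (nn_strictAnti hmono (by omega) h hx'.2))
  have hdisj : Disjoint ((Icc 1 (f i)).image (bb K f)) ((Icc (i+1) K).image (nn K f)) := by
    rw [disjoint_left]
    intro a ha hb
    rw [mem_image] at ha hb
    obtain ⟨j, hj, rfl⟩ := ha
    obtain ⟨t, ht, hbt⟩ := hb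
    have ht' := mem_Icc.mp ht
    exact bb_ne_nn hmono (mem_Icc.mpr ⟨by omega, ht'.2⟩) (mem_Icc.mp hj).1 hbt.symm
  have hset : (Icc 1 (f i)).image (bb K f) ∪ (Icc (i+1) K).image (nn K f)
      = range (nn K f i) := by
    apply eq_of_subset_of_card_le
    · intro a ha
      rw [mem_union] at ha
      rw [mem_range]
      rcases ha with ha | ha
      · rw [mem_image] at ha
        obtain ⟨j, hj, rfl⟩ := ha
        have hj' := mem_Icc.mp hj
        exact bb_lt_nn hmono hi hj'.1 hj'.2
      · rw [mem_image] at ha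
        obtain ⟨t, ht, rfl⟩ := ha
        have ht' := mem_Icc.mp ht
        exact nn_strictAnti hmono hi'.1 (by omega) ht'.2
    · rw [card_union_of_disjoint hdisj, card_image_of_injOn, card_image_of_injOn,
        Nat.card_Icc, Nat.card_Icc, card_range]
      · unfold nn; omega
      · intro x hx y hy; exact hinj2 x hx y hy
      · intro x hx y hy; exact hinj1 x hx y hy
  calc (∏ j ∈ Icc 1 (f i), (c - (bb K f j : ℂ))) *
      (∏ t ∈ Icc (i+1) K, (c - (nn K f t : ℂ)))
      = (∏ v ∈ (Icc 1 (f i)).image (bb K f), (c - (v : ℂ))) *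
        (∏ v ∈ (Icc (i+1) K).image (nn K f), (c - (v : ℂ))) := by
        rw [prod_image hinj1, prod_image hinj2]
    _ = ∏ v ∈ (Icc 1 (f i)).image (bb K f) ∪ (Icc (i+1) K).image (nn K f),
          (c - (v : ℂ)) := (prod_union hdisj).symm
    _ = ∏ v ∈ range (nn K f i), (c - (v : ℂ)) := by rw [hset]

end BCaux

namespace BCaux

lemma prod_sub_factorial (n : ℕ) : ∏ v ∈ range n, ((n : ℂ) - (v : ℂ)) = (n.factorial : ℂ) := by
  have h := Finset.prod_range_reflect (fun v => (n : ℂ) - (v : ℂ)) n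
  rw [← h]
  have : ∀ j ∈ range n, (n : ℂ) - ((n - 1 - j : ℕ) : ℂ) = ((j + 1 : ℕ) : ℂ) := by
    intro j hj
    rw [mem_range] at hj
    have : n - 1 - j = n - (j + 1) := by omega
    rw [this, Nat.cast_sub (by omega)]
    push_cast
    ring
  rw [prod_congr rfl this, ← Nat.cast_prod, Finset.prod_range_add_one_eq_factorial]

lemma Gamma_shift (z : ℂ) (n : ℕ) (h : ∀ v : ℕ, v < n → z + v ≠ 0) :
    Complex.Gamma (z + n) = Complex.Gamma z * ∏ v ∈ range n, (z + v) := by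
  induction n with
  | zero => simp
  | succ n ih =>
    have hz : z + n ≠ 0 := h n (by omega)
    have : z + (n + 1 : ℕ) = (z + n) + 1 := by push_cast; ring
    rw [this, Complex.Gamma_add_one _ hz, ih (fun v hv => h v (by omega)),
      prod_range_succ]
    ring

lemma keyE (s : ℂ) (hs : ∀ k : ℤ, s ≠ (k : ℂ)) (n m : ℕ) :
    (∏ v ∈ range n, ((m : ℂ) + s - v)) * (∏ v ∈ range m, ((n : ℂ) - s - v)) *
        ((n : ℂ) - (m : ℂ) - s)
      = (-1) ^ (n + m + 1) *
        ((∏ v ∈ range n, ((v : ℂ) + 1 - s)) * ∏ v ∈ range (m + 1), ((v : ℂ) + s)) := by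
  induction n with
  | zero =>
    simp only [Nat.cast_zero, range_zero, prod_empty, one_mul, zero_add]
    have h1 : ∀ v ∈ range m, ((0 : ℂ)) - s - v = (-1) * ((v : ℂ) + s) := by
      intro v hv; ring
    rw [prod_congr rfl h1, prod_mul_distrib, prod_const, card_range]
    have : ((0 : ℂ)) - (m : ℂ) - s = (-1) * ((m : ℂ) + s) := by ring
    rw [this, prod_range_succ]
    ring
  | succ n ih =>
    have hD : (n : ℂ) - (m : ℂ) - s ≠ 0 := by
      intro h
      apply hs ((n : ℤ) - (m : ℤ))
      push_cast
      linear_combination -h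
    -- telescoping: ∏_{v<m}(n+1-s-v) * (n+1-m-s) = (n+1-s) * ∏_{v<m}(n-s-v)
    have htel : (∏ v ∈ range m, (((n + 1 : ℕ) : ℂ) - s - v)) * (((n + 1 : ℕ) : ℂ) - m - s)
        = (((n : ℂ) + 1 - s)) * ∏ v ∈ range m, ((n : ℂ) - s - v) := by
      have h1 : (∏ v ∈ range (m + 1), (((n : ℂ) + 1) - s - v))
          = (∏ v ∈ range m, (((n : ℂ) + 1) - s - v)) * (((n : ℂ) + 1) - s - m) :=
        prod_range_succ _ m
      have h2 := prod_range_succ' (fun k : ℕ => ((n : ℂ) + 1) - s - (k : ℂ)) m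
      push_cast at h2
      push_cast
      rw [show ((n : ℂ) + 1 - (m : ℂ) - s) = (((n : ℂ) + 1) - s - m) by ring, ← h1, h2]
      have : ∀ v ∈ range m, ((n : ℂ) + 1) - s - ((v : ℂ) + 1) = (n : ℂ) - s - v := by
        intro v hv; ring
      rw [prod_congr rfl this]
      ring
    apply mul_right_cancel₀ hD
    have hP : (∏ v ∈ range (n + 1), ((m : ℂ) + s - v))
        = (∏ v ∈ range n, ((m : ℂ) + s - v)) * ((m : ℂ) + s - n) := prod_range_succ _ n
    calc (∏ v ∈ range (n + 1), ((m : ℂ) + s - v)) *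
          (∏ v ∈ range m, (((n + 1 : ℕ) : ℂ) - s - v)) * (((n + 1 : ℕ) : ℂ) - m - s) *
          ((n : ℂ) - m - s)
        = ((m : ℂ) + s - n) * (((n : ℂ) + 1 - s)) *
            ((∏ v ∈ range n, ((m : ℂ) + s - v)) * (∏ v ∈ range m, ((n : ℂ) - s - v)) *
              ((n : ℂ) - m - s)) := by
          rw [hP]
          nth_rewrite 1 [show (∏ v ∈ range n, ((m : ℂ) + s - v)) * ((m : ℂ) + s - ↑n) *
            (∏ v ∈ range m, (((n + 1 : ℕ) : ℂ) - s - v)) * (((n + 1 : ℕ) : ℂ) - ↑m - s) =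
            ((m : ℂ) + s - ↑n) * ((∏ v ∈ range m, (((n + 1 : ℕ) : ℂ) - s - v)) *
              (((n + 1 : ℕ) : ℂ) - ↑m - s)) * (∏ v ∈ range n, ((m : ℂ) + s - v)) by ring]
          rw [htel]
          ring
      _ = ((m : ℂ) + s - n) * (((n : ℂ) + 1 - s)) *
            ((-1) ^ (n + m + 1) *
              ((∏ v ∈ range n, ((v : ℂ) + 1 - s)) * ∏ v ∈ range (m + 1), ((v : ℂ) + s))) := by
          rw [ih]
      _ = ((-1) ^ (n + 1 + m + 1) *
            ((∏ v ∈ range (n + 1), ((v : ℂ) + 1 - s)) * ∏ v ∈ range (m + 1), ((v : ℂ) + s))) *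
          ((n : ℂ) - m - s) := by
          rw [prod_range_succ (fun v => (v : ℂ) + 1 - s) n]
          have hsgn : ((-1 : ℂ)) ^ (n + 1 + m + 1) = (-1) * (-1) ^ (n + m + 1) := by
            rw [show n + 1 + m + 1 = (n + m + 1) + 1 by ring, pow_succ]
            ring
          rw [hsgn]
          have : (m : ℂ) + s - n = (-1) * ((n : ℂ) - m - s) := by ring
          rw [this]
          ring

end BCaux

namespace BCaux
variable {M : Type*} [CommMonoid M]

lemma prod_Ico_shift (m n : ℕ) (g : ℕ → M) :
    ∏ b ∈ Ico m n, g (b + 1) = ∏ t ∈ Icc (m + 1) n, g t := by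
  rw [← Finset.Ico_add_one_right_eq_Icc]
  simpa using Finset.prod_Ico_add' g m n 1

lemma prod_range_shift (n : ℕ) (g : ℕ → M) :
    ∏ b ∈ range n, g (b + 1) = ∏ t ∈ Icc 1 n, g t := by
  rw [range_eq_Ico, prod_Ico_shift]

lemma fin_inner (n : ℕ) (a : Fin n) (g : ℕ → M) :
    ∏ j ∈ univ.filter (fun j : Fin n => a < j), g (j : ℕ) = ∏ b ∈ Ico ((a : ℕ) + 1) n, g b := by
  apply Finset.prod_nbij' (fun j : Fin n => (j : ℕ))
    (fun b : ℕ => if h : b < n then (⟨b, h⟩ : Fin n) else a)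
  · intro j hj
    rw [mem_filter] at hj
    rw [mem_Ico]
    exact ⟨hj.2, j.isLt⟩
  · intro b hb
    rw [mem_Ico] at hb
    rw [dif_pos hb.2, mem_filter]
    exact ⟨mem_univ _, by simpa [Fin.lt_def] using hb.1⟩
  · intro j hj
    rw [mem_filter] at hj
    simp [j.isLt]
  · intro b hb
    rw [mem_Ico] at hb
    rw [dif_pos hb.2]
  · intro j hj
    rfl

lemma fin_to_range (n : ℕ) (G : Fin n → Fin n → M) (g : ℕ → ℕ → M)
    (h : ∀ i j : Fin n, G i j = g (i : ℕ) (j : ℕ)) :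
    ∏ i : Fin n, ∏ j ∈ univ.filter (fun j : Fin n => i < j), G i j =
      ∏ a ∈ range n, ∏ b ∈ Ico (a + 1) n, g a b := by
  calc ∏ i : Fin n, ∏ j ∈ univ.filter (fun j : Fin n => i < j), G i j
      = ∏ i : Fin n, ∏ b ∈ Ico ((i : ℕ) + 1) n, g (i : ℕ) b := by
        apply prod_congr rfl
        intro i _
        rw [prod_congr rfl (fun j _ => h i j)]
        exact fin_inner n i (fun b => g (i : ℕ) b)
    _ = ∏ a ∈ range n, ∏ b ∈ Ico (a + 1) n, g a b :=
        Fin.prod_univ_eq_prod_range (fun a => ∏ b ∈ Ico (a + 1) n, g a b) n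

lemma fin_prod_to_range (n : ℕ) (w : Fin n → M) (y : ℕ → M)
    (hxy : ∀ i : Fin n, w i = y (i : ℕ)) :
    ∏ i : Fin n, w i = ∏ a ∈ range n, y a := by
  rw [show (∏ i : Fin n, w i) = ∏ i : Fin n, y (i : ℕ) from prod_congr rfl fun i _ => hxy i]
  exact Fin.prod_univ_eq_prod_range y n

lemma vandermonde_split (K : ℕ) (g gAA gAB gBB : ℕ → ℕ → M)
    (hAA : ∀ a b, a < K → b < K → g a b = gAA (a + 1) (b + 1))
    (hAB : ∀ a b, a < K → b < K → g a (K + b) = gAB (a + 1) (b + 1))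
    (hBB : ∀ a b, a < K → b < K → g (K + a) (K + b) = gBB (a + 1) (b + 1)) :
    ∏ a ∈ range (2 * K), ∏ b ∈ Ico (a + 1) (2 * K), g a b =
      ((∏ i ∈ Icc 1 K, ∏ t ∈ Icc (i + 1) K, gAA i t) *
        (∏ i ∈ Icc 1 K, ∏ t ∈ Icc 1 K, gAB i t)) *
      (∏ i ∈ Icc 1 K, ∏ t ∈ Icc (i + 1) K, gBB i t) := by
  rw [two_mul, prod_range_add]
  congr 1
  · rw [← prod_mul_distrib, ← prod_range_shift K
      (fun i => (∏ t ∈ Icc (i + 1) K, gAA i t) * (∏ t ∈ Icc 1 K, gAB i t))]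
    apply prod_congr rfl
    intro a ha
    rw [mem_range] at ha
    rw [← Finset.prod_Ico_consecutive (fun b => g a b)
      (show a + 1 ≤ K by omega) (show K ≤ K + K by omega)]
    congr 1
    · rw [← prod_Ico_shift (a + 1) K (fun t => gAA (a + 1) t)]
      apply prod_congr rfl
      intro b hb
      rw [mem_Ico] at hb
      exact hAA a b ha hb.2
    · rw [prod_Ico_eq_prod_range]
      have : K + K - K = K := by omega
      rw [this, ← prod_range_shift K (fun t => gAB (a + 1) t)]
      apply prod_congr rfl
      intro b hb
      rw [mem_range] at hb
      exact hAB a b ha hb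
  · rw [← prod_range_shift K (fun i => ∏ t ∈ Icc (i + 1) K, gBB i t)]
    apply prod_congr rfl
    intro a ha
    rw [mem_range] at ha
    rw [prod_Ico_eq_prod_range]
    have h1 : K + K - (K + a + 1) = K - (a + 1) := by omega
    rw [h1]
    have h2 : Icc (a + 1 + 1) K = Ico (a + 1 + 1) (K + 1) := by rw [Finset.Ico_add_one_right_eq_Icc]
    rw [h2, prod_Ico_eq_prod_range]
    have h3 : K + 1 - (a + 1 + 1) = K - (a + 1) := by omega
    rw [h3]
    apply prod_congr rfl
    intro b hb
    rw [mem_range] at hb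
    rw [show K + a + 1 + b = K + (a + 1 + b) by omega, hBB a (a + 1 + b) ha (by omega)]
    congr 1
    omega

lemma two_blocks (K : ℕ) (w wA wB : ℕ → M)
    (hA : ∀ a, a < K → w a = wA (a + 1)) (hB : ∀ a, a < K → w (K + a) = wB (a + 1)) :
    ∏ a ∈ range (2 * K), w a = (∏ i ∈ Icc 1 K, wA i) * ∏ i ∈ Icc 1 K, wB i := by
  rw [two_mul, prod_range_add]
  congr 1
  · rw [← prod_range_shift K wA]
    exact prod_congr rfl fun a ha => hA a (mem_range.mp ha)
  · rw [← prod_range_shift K wB]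
    exact prod_congr rfl fun a ha => hB a (mem_range.mp ha)

lemma triangle_split (K : ℕ) (g : ℕ → ℕ → M) :
    ∏ i ∈ Icc 1 K, ∏ t ∈ Icc 1 K, g i t =
      ((∏ i ∈ Icc 1 K, g i i) *
        (∏ i ∈ Icc 1 K, ∏ t ∈ Icc (i + 1) K, g i t)) *
      (∏ i ∈ Icc 1 K, ∏ t ∈ Icc (i + 1) K, g t i) := by
  have hsplit : ∀ i ∈ Icc 1 K,
      ∏ t ∈ Icc 1 K, g i t =
        (g i i * ∏ t ∈ Icc (i + 1) K, g i t) * ∏ t ∈ Ico 1 i, g i t := by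
    intro i hi
    have hi' := mem_Icc.mp hi
    rw [← Finset.Ico_add_one_right_eq_Icc, ← Finset.prod_Ico_consecutive (fun t => g i t)
      (show 1 ≤ i by omega) (show i ≤ K + 1 by omega),
      Finset.prod_eq_prod_Ico_succ_bot (show i < K + 1 by omega) (fun t => g i t),
      Finset.Ico_add_one_right_eq_Icc]
    ring_nf
    rw [mul_comm]
  rw [prod_congr rfl hsplit, prod_mul_distrib, prod_mul_distrib]
  congr 1
  apply prod_comm'
  intro x y
  simp only [mem_Icc, mem_Ico]
  omega

end BCaux
namespace BCaux
open Finset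

noncomputable section

def Pl (K : ℕ) (f : ℕ → ℕ) : ℂ :=
  ∏ i ∈ Icc 1 K, ∏ j ∈ Icc 1 (f i), ((nn K f i : ℂ) - (bb K f j : ℂ))

def Tl (K : ℕ) (f g : ℕ → ℕ) (s : ℂ) : ℂ :=
  ∏ i ∈ Icc 1 K, ∏ j ∈ Icc 1 (f i), ((nn K g i : ℂ) + s - (bb K f j : ℂ))

def Fl (K : ℕ) (f : ℕ → ℕ) : ℂ := ∏ i ∈ Icc 1 K, ((nn K f i).factorial : ℂ)

def Dl (K : ℕ) (f : ℕ → ℕ) : ℂ :=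
  ∏ i ∈ Icc 1 K, ∏ t ∈ Icc (i + 1) K, ((nn K f i : ℂ) - (nn K f t : ℂ))

def Gp (K : ℕ) (f : ℕ → ℕ) (s : ℂ) : ℂ :=
  ∏ i ∈ Icc 1 K, ∏ v ∈ range (nn K f i), ((v : ℂ) + 1 - s)

def Hp (K : ℕ) (f : ℕ → ℕ) (s : ℂ) : ℂ :=
  ∏ i ∈ Icc 1 K, ∏ v ∈ range (nn K f i + 1), ((v : ℂ) + s)

def Xp (K : ℕ) (f g : ℕ → ℕ) (s : ℂ) : ℂ :=
  ∏ i ∈ Icc 1 K, ∏ t ∈ Icc 1 K, ((nn K f i : ℂ) - (nn K g t : ℂ) - s) ^ 2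

def DelSq (K : ℕ) (f : ℕ → ℕ) : ℂ :=
  ∏ i ∈ Icc 1 K, ∏ t ∈ Icc (i + 1) K, ((nn K f i : ℂ) - (nn K f t : ℂ)) ^ 2

variable {K : ℕ} {f g : ℕ → ℕ}

/-- hook identity -/
lemma hook_id (hmono : ∀ i j, 1 ≤ i → i ≤ j → f j ≤ f i) :
    Pl K f * Dl K f = Fl K f := by
  unfold Pl Dl Fl
  rw [← prod_mul_distrib]
  apply prod_congr rfl
  intro i hi
  rw [row hmono hi ((nn K f i : ℂ))]
  exact prod_sub_factorial (nn K f i)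

/-- cross row identity, product form -/
lemma cross_id (hmono : ∀ i j, 1 ≤ i → i ≤ j → f j ≤ f i) (s : ℂ) :
    Tl K f g s * ∏ i ∈ Icc 1 K, ∏ t ∈ Icc (i + 1) K, ((nn K g i : ℂ) + s - (nn K f t : ℂ)) =
    ∏ i ∈ Icc 1 K, ∏ v ∈ range (nn K f i), ((nn K g i : ℂ) + s - (v : ℂ)) := by
  unfold Tl
  rw [← prod_mul_distrib]
  apply prod_congr rfl
  intro i hi
  exact row hmono hi ((nn K g i : ℂ) + s)

/-- cast of `nn` -/
lemma nn_cast {i : ℕ} (hi : i ≤ K) : ((nn K f i : ℕ) : ℂ) = (f i : ℂ) + (K : ℂ) - (i : ℂ) := by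
  unfold nn
  rw [Nat.cast_add, Nat.cast_sub hi]
  ring

/-- cast of `bb` -/
lemma bb_cast {j : ℕ} (hj : 1 ≤ j) :
    ((bb K f j : ℕ) : ℂ) = (K : ℂ) - (conj K f j : ℂ) + (j : ℂ) - 1 := by
  unfold bb
  rw [Nat.cast_add, Nat.cast_sub (conj_le j), Nat.cast_sub hj]
  push_cast
  ring

end

end BCaux
namespace BCaux
open Finset

noncomputable section

variable {K : ℕ}

lemma KEY (K : ℕ) (lam mu : ℕ → ℕ)
    (hl : ∀ i j, 1 ≤ i → i ≤ j → lam j ≤ lam i)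
    (hm : ∀ i j, 1 ≤ i → i ≤ j → mu j ≤ mu i)
    (s : ℂ) (hs : ∀ k : ℤ, s ≠ (k : ℂ)) :
    (Fl K lam * Gp K lam s * Hp K mu s * Fl K mu) ^ 2 =
      (Pl K lam * Tl K lam mu s * Pl K mu * Tl K mu lam (-s)) ^ 2 *
        ((DelSq K lam * Xp K lam mu s) * DelSq K mu) := by
  have hA := hook_id (K := K) (f := lam) hl
  have hB := hook_id (K := K) (f := mu) hm
  have hC1 := cross_id (K := K) (f := lam) (g := mu) hl s
  have hC2 := cross_id (K := K) (f := mu) (g := lam) hm (-s)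
  -- names
  set ν : ℕ → ℕ := nn K lam with hν
  set mt : ℕ → ℕ := nn K mu with hmt
  -- X split
  have hXsplit := triangle_split K (fun i t => ((ν i : ℂ) - (mt t : ℂ) - s) ^ 2)
  -- squares of the W products
  have hL2 : (∏ i ∈ Icc 1 K, ∏ t ∈ Icc (i + 1) K, ((mt i : ℂ) + s - (ν t : ℂ))) ^ 2 =
      ∏ i ∈ Icc 1 K, ∏ t ∈ Icc (i + 1) K, ((ν t : ℂ) - (mt i : ℂ) - s) ^ 2 := by
    rw [← prod_pow]
    apply prod_congr rfl
    intro i _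
    rw [← prod_pow]
    exact prod_congr rfl fun t _ => by ring
  have hU2 : (∏ i ∈ Icc 1 K, ∏ t ∈ Icc (i + 1) K, ((ν i : ℂ) + -s - (mt t : ℂ))) ^ 2 =
      ∏ i ∈ Icc 1 K, ∏ t ∈ Icc (i + 1) K, ((ν i : ℂ) - (mt t : ℂ) - s) ^ 2 := by
    rw [← prod_pow]
    apply prod_congr rfl
    intro i _
    rw [← prod_pow]
    exact prod_congr rfl fun t _ => by ring
  -- diagonal
  have hD2 : (∏ i ∈ Icc 1 K, ((ν i : ℂ) - (mt i : ℂ) - s)) ^ 2 =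
      ∏ i ∈ Icc 1 K, ((ν i : ℂ) - (mt i : ℂ) - s) ^ 2 := (prod_pow _ _ _).symm
  -- per-index keyE, squared
  have hE : ∏ i ∈ Icc 1 K,
      ((∏ v ∈ range (ν i), ((mt i : ℂ) + s - (v : ℂ))) *
        (∏ v ∈ range (mt i), ((ν i : ℂ) - s - (v : ℂ))) *
        ((ν i : ℂ) - (mt i : ℂ) - s)) ^ 2 =
      ∏ i ∈ Icc 1 K,
      ((∏ v ∈ range (ν i), ((v : ℂ) + 1 - s)) *
        (∏ v ∈ range (mt i + 1), ((v : ℂ) + s))) ^ 2 := by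
    apply prod_congr rfl
    intro i _
    rw [keyE s hs (ν i) (mt i), mul_pow, ← pow_mul, mul_comm (ν i + mt i + 1) 2, pow_mul]
    norm_num
  -- assemble (Gp * Hp)^2
  have hGH : (Gp K lam s * Hp K mu s) ^ 2 =
      (Tl K lam mu s * Tl K mu lam (-s)) ^ 2 * Xp K lam mu s := by
    have e1 : Gp K lam s * Hp K mu s = ∏ i ∈ Icc 1 K,
        ((∏ v ∈ range (ν i), ((v : ℂ) + 1 - s)) *
          (∏ v ∈ range (mt i + 1), ((v : ℂ) + s))) := by
      rw [Gp, Hp, ← prod_mul_distrib]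
    rw [e1, ← prod_pow, ← hE, prod_pow]
    have e2 : ∏ i ∈ Icc 1 K,
        ((∏ v ∈ range (ν i), ((mt i : ℂ) + s - (v : ℂ))) *
          (∏ v ∈ range (mt i), ((ν i : ℂ) - s - (v : ℂ))) *
          ((ν i : ℂ) - (mt i : ℂ) - s)) =
        (∏ i ∈ Icc 1 K, ∏ v ∈ range (ν i), ((mt i : ℂ) + s - (v : ℂ))) *
        (∏ i ∈ Icc 1 K, ∏ v ∈ range (mt i), ((ν i : ℂ) - s - (v : ℂ))) *
        (∏ i ∈ Icc 1 K, ((ν i : ℂ) - (mt i : ℂ) - s)) := by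
      rw [prod_mul_distrib, prod_mul_distrib]
    rw [e2]
    -- rewrite the two R-products via cross identities
    have e3 : ∏ i ∈ Icc 1 K, ∏ v ∈ range (ν i), ((mt i : ℂ) + s - (v : ℂ)) =
        Tl K lam mu s * ∏ i ∈ Icc 1 K, ∏ t ∈ Icc (i + 1) K, ((mt i : ℂ) + s - (ν t : ℂ)) :=
      hC1.symm
    have e4 : ∏ i ∈ Icc 1 K, ∏ v ∈ range (mt i), ((ν i : ℂ) + -s - (v : ℂ)) =
        Tl K mu lam (-s) * ∏ i ∈ Icc 1 K, ∏ t ∈ Icc (i + 1) K, ((ν i : ℂ) + -s - (mt t : ℂ)) :=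
      hC2.symm
    have e4' : ∏ i ∈ Icc 1 K, ∏ v ∈ range (mt i), ((ν i : ℂ) - s - (v : ℂ)) =
        Tl K mu lam (-s) * ∏ i ∈ Icc 1 K, ∏ t ∈ Icc (i + 1) K, ((ν i : ℂ) + -s - (mt t : ℂ)) := by
      rw [← e4]
      exact prod_congr rfl fun i _ => prod_congr rfl fun v _ => by ring
    rw [e3, e4']
    have exp : ∀ a b c d e : ℂ, (a * b * (c * d) * e) ^ 2
        = (a * c) ^ 2 * (b ^ 2 * (d ^ 2 * e ^ 2)) := by intros; ring
    rw [exp]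
    rw [hL2, hU2, hD2]
    unfold Xp
    rw [hXsplit]
    ring
  -- final assembly
  calc (Fl K lam * Gp K lam s * Hp K mu s * Fl K mu) ^ 2
      = (Pl K lam * Dl K lam) ^ 2 * (Pl K mu * Dl K mu) ^ 2 *
          (Gp K lam s * Hp K mu s) ^ 2 := by
        rw [hA, hB]; ring
    _ = (Pl K lam * Dl K lam) ^ 2 * (Pl K mu * Dl K mu) ^ 2 *
          ((Tl K lam mu s * Tl K mu lam (-s)) ^ 2 * Xp K lam mu s) := by rw [hGH]
    _ = (Pl K lam * Tl K lam mu s * Pl K mu * Tl K mu lam (-s)) ^ 2 *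
          ((DelSq K lam * Xp K lam mu s) * DelSq K mu) := by
        have d1 : DelSq K lam = (Dl K lam) ^ 2 := by
          unfold DelSq Dl
          rw [← prod_pow]
          exact prod_congr rfl fun i _ => prod_pow _ _ _
        have d2 : DelSq K mu = (Dl K mu) ^ 2 := by
          unfold DelSq Dl
          rw [← prod_pow]
          exact prod_congr rfl fun i _ => prod_pow _ _ _
        rw [d1, d2]
        ring

end

end BCaux
namespace BCaux
open Finset

noncomputable section

variable {K : ℕ} {f g : ℕ → ℕ}

lemma Pl_ne_zero (hmono : ∀ i j, 1 ≤ i → i ≤ j → f j ≤ f i) : Pl K f ≠ 0 := by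
  rw [Pl, prod_ne_zero_iff]
  intro i hi
  rw [prod_ne_zero_iff]
  intro j hj
  have hj' := mem_Icc.mp hj
  have h := bb_lt_nn hmono hi hj'.1 hj'.2
  have : (bb K f j : ℂ) ≠ (nn K f i : ℂ) := by
    exact_mod_cast Nat.ne_of_lt h
  exact sub_ne_zero_of_ne this.symm

lemma Tl_ne_zero (s : ℂ) (hs : ∀ k : ℤ, s ≠ (k : ℂ)) : Tl K f g s ≠ 0 := by
  rw [Tl, prod_ne_zero_iff]
  intro i _
  rw [prod_ne_zero_iff]
  intro j _
  intro h
  apply hs ((bb K f j : ℤ) - (nn K g i : ℤ))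
  push_cast
  linear_combination h

lemma DelSq_ne_zero (hmono : ∀ i j, 1 ≤ i → i ≤ j → f j ≤ f i) : DelSq K f ≠ 0 := by
  rw [DelSq, prod_ne_zero_iff]
  intro i hi
  rw [prod_ne_zero_iff]
  intro t ht
  apply pow_ne_zero
  have hi' := mem_Icc.mp hi
  have ht' := mem_Icc.mp ht
  have h := nn_strictAnti hmono hi'.1 (by omega : i < t) ht'.2
  have : (nn K f t : ℂ) ≠ (nn K f i : ℂ) := by exact_mod_cast Nat.ne_of_lt h
  exact sub_ne_zero_of_ne this.symm

lemma Xp_ne_zero (lam mu : ℕ → ℕ) (s : ℂ) (hs : ∀ k : ℤ, s ≠ (k : ℂ)) :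
    Xp K lam mu s ≠ 0 := by
  rw [Xp, prod_ne_zero_iff]
  intro i _
  rw [prod_ne_zero_iff]
  intro t _
  apply pow_ne_zero
  intro h
  apply hs ((nn K lam i : ℤ) - (nn K mu t : ℤ))
  push_cast
  linear_combination -h

lemma Fl_ne_zero : Fl K f ≠ 0 := by
  rw [Fl, prod_ne_zero_iff]
  intro i _
  exact_mod_cast (Nat.factorial_ne_zero _)

end

end BCaux

/-- Bare conformal block coefficient as a discrete Coulomb gas configuration:
for `σ` not half an integer and partitions `λ, μ` of length `≤ K`,
`B_{λ,μ}([];σ) = Γ(2σ)^{2K} Γ(1−2σ)^{2K} ∏_{i<j}(x_i−x_j)² ∏_i v_σ(x_i)`,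
with `v_σ(z) = 1/(Γ(z+1+σ)²Γ(z+1−σ)²)`, `x_i = λ_i − i + K − σ`,
`x_{K+i} = μ_i − i + K + σ`. -/
theorem bare_coefficient_matrix_model (K : ℕ) (hK : 0 < K) (σ : ℂ)
    (hσ : ∀ m : ℤ, 2 * σ ≠ (m : ℂ))
    (lam mu : ℕ → ℕ)
    (hlam_mono : ∀ i j, 1 ≤ i → i ≤ j → lam j ≤ lam i)
    (hlam_len : ∀ i, K < i → lam i = 0)
    (hmu_mono : ∀ i j, 1 ≤ i → i ≤ j → mu j ≤ mu i)
    (hmu_len : ∀ i, K < i → mu i = 0)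
    (x : Fin (2 * K) → ℂ)
    (hx : ∀ i : Fin (2 * K), x i =
      if (i : ℕ) < K then
        ((lam ((i : ℕ) + 1) : ℂ) - (((i : ℕ) + 1 : ℕ) : ℂ) + (K : ℂ)) - σ
      else
        ((mu ((i : ℕ) - K + 1) : ℂ) - (((i : ℕ) - K + 1 : ℕ) : ℂ) + (K : ℂ)) + σ) :
    (∏ i ∈ Finset.Icc 1 K, ∏ j ∈ Finset.Icc 1 (lam i),
        1 / ((((lam i : ℂ) - (i : ℂ) +
                ((((Finset.Icc 1 K).filter fun t => j ≤ lam t).card : ℂ)) - (j : ℂ) + 1)) ^ 2 *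
            (((((Finset.Icc 1 K).filter fun t => j ≤ lam t).card : ℂ)
                + (mu i : ℂ) - (i : ℂ) - (j : ℂ) + 1 + 2 * σ)) ^ 2)) *
      (∏ i ∈ Finset.Icc 1 K, ∏ j ∈ Finset.Icc 1 (mu i),
        1 / ((((mu i : ℂ) - (i : ℂ) +
                ((((Finset.Icc 1 K).filter fun t => j ≤ mu t).card : ℂ)) - (j : ℂ) + 1)) ^ 2 *
            (((lam i : ℂ) + (((Finset.Icc 1 K).filter fun t => j ≤ mu t).card : ℂ)
                - (i : ℂ) - (j : ℂ) + 1 - 2 * σ)) ^ 2)) =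
      Complex.Gamma (2 * σ) ^ (2 * K) * Complex.Gamma (1 - 2 * σ) ^ (2 * K) *
        (∏ i : Fin (2 * K), ∏ j ∈ Finset.univ.filter (fun j : Fin (2 * K) => i < j),
          (x i - x j) ^ 2) *
        ∏ i : Fin (2 * K),
          1 / (Complex.Gamma (x i + 1 + σ) ^ 2 * Complex.Gamma (x i + 1 - σ) ^ 2) := by
  classical
  open BCaux in
  set s : ℂ := 2 * σ with hs_def
  have hsZ : ∀ k : ℤ, s ≠ (k : ℂ) := fun k => hσ k
  have hsZ' : ∀ k : ℤ, -s ≠ (k : ℂ) := by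
    intro k h
    apply hsZ (-k)
    push_cast
    linear_combination -h
  -- ===================== LHS =====================
  have hLa : (∏ i ∈ Finset.Icc 1 K, ∏ j ∈ Finset.Icc 1 (lam i),
        1 / ((((lam i : ℂ) - (i : ℂ) +
                ((((Finset.Icc 1 K).filter fun t => j ≤ lam t).card : ℂ)) - (j : ℂ) + 1)) ^ 2 *
            (((((Finset.Icc 1 K).filter fun t => j ≤ lam t).card : ℂ)
                + (mu i : ℂ) - (i : ℂ) - (j : ℂ) + 1 + s)) ^ 2))
      = ((Pl K lam * Tl K lam mu s) ^ 2)⁻¹ := by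
    have step : ∀ i ∈ Icc 1 K, ∀ j ∈ Icc 1 (lam i),
        1 / ((((lam i : ℂ) - (i : ℂ) +
                ((((Finset.Icc 1 K).filter fun t => j ≤ lam t).card : ℂ)) - (j : ℂ) + 1)) ^ 2 *
            (((((Finset.Icc 1 K).filter fun t => j ≤ lam t).card : ℂ)
                + (mu i : ℂ) - (i : ℂ) - (j : ℂ) + 1 + s)) ^ 2)
        = ((((nn K lam i : ℂ) - (bb K lam j : ℂ)) *
            ((nn K mu i : ℂ) + s - (bb K lam j : ℂ))) ^ 2)⁻¹ := by
      intro i hi j hj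
      have hi' := mem_Icc.mp hi
      have hj' := mem_Icc.mp hj
      have hcard : (((Finset.Icc 1 K).filter fun t => j ≤ lam t).card) = conj K lam j := rfl
      rw [hcard]
      have e1 : (lam i : ℂ) - (i : ℂ) + (conj K lam j : ℂ) - (j : ℂ) + 1
          = (nn K lam i : ℂ) - (bb K lam j : ℂ) := by
        rw [nn_cast hi'.2, bb_cast hj'.1]; ring
      have e2 : (conj K lam j : ℂ) + (mu i : ℂ) - (i : ℂ) - (j : ℂ) + 1 + s
          = (nn K mu i : ℂ) + s - (bb K lam j : ℂ) := by
        rw [nn_cast (f := mu) hi'.2, bb_cast (f := lam) hj'.1]; ring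
      rw [e1, e2, one_div, mul_pow]
    rw [prod_congr rfl (fun i hi => prod_congr rfl (step i hi))]
    simp only [prod_inv_distrib, prod_pow, prod_mul_distrib]
    rw [Pl, Tl]
  have hLb : (∏ i ∈ Finset.Icc 1 K, ∏ j ∈ Finset.Icc 1 (mu i),
        1 / ((((mu i : ℂ) - (i : ℂ) +
                ((((Finset.Icc 1 K).filter fun t => j ≤ mu t).card : ℂ)) - (j : ℂ) + 1)) ^ 2 *
            (((lam i : ℂ) + (((Finset.Icc 1 K).filter fun t => j ≤ mu t).card : ℂ)
                - (i : ℂ) - (j : ℂ) + 1 - s)) ^ 2))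
      = ((Pl K mu * Tl K mu lam (-s)) ^ 2)⁻¹ := by
    have step : ∀ i ∈ Icc 1 K, ∀ j ∈ Icc 1 (mu i),
        1 / ((((mu i : ℂ) - (i : ℂ) +
                ((((Finset.Icc 1 K).filter fun t => j ≤ mu t).card : ℂ)) - (j : ℂ) + 1)) ^ 2 *
            (((lam i : ℂ) + (((Finset.Icc 1 K).filter fun t => j ≤ mu t).card : ℂ)
                - (i : ℂ) - (j : ℂ) + 1 - s)) ^ 2)
        = ((((nn K mu i : ℂ) - (bb K mu j : ℂ)) *
            ((nn K lam i : ℂ) + (-s) - (bb K mu j : ℂ))) ^ 2)⁻¹ := by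
      intro i hi j hj
      have hi' := mem_Icc.mp hi
      have hj' := mem_Icc.mp hj
      have hcard : (((Finset.Icc 1 K).filter fun t => j ≤ mu t).card) = conj K mu j := rfl
      rw [hcard]
      have e1 : (mu i : ℂ) - (i : ℂ) + (conj K mu j : ℂ) - (j : ℂ) + 1
          = (nn K mu i : ℂ) - (bb K mu j : ℂ) := by
        rw [nn_cast hi'.2, bb_cast hj'.1]; ring
      have e2 : (lam i : ℂ) + (conj K mu j : ℂ) - (i : ℂ) - (j : ℂ) + 1 - s
          = (nn K lam i : ℂ) + (-s) - (bb K mu j : ℂ) := by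
        rw [nn_cast (f := lam) hi'.2, bb_cast (f := mu) hj'.1]; ring
      rw [e1, e2, one_div, mul_pow]
    rw [prod_congr rfl (fun i hi => prod_congr rfl (step i hi))]
    simp only [prod_inv_distrib, prod_pow, prod_mul_distrib]
    rw [Pl, Tl]
  -- ===================== x = Y =====================
  set Y : ℕ → ℂ := fun a => if a < K then ((nn K lam (a + 1) : ℂ) - σ)
      else ((nn K mu (a - K + 1) : ℂ) + σ) with hY
  have hy : ∀ i : Fin (2 * K), x i = Y (i : ℕ) := by
    intro i
    rw [hx i]
    simp only [hY]
    by_cases h : (i : ℕ) < K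
    · rw [if_pos h, if_pos h, nn_cast (show (i : ℕ) + 1 ≤ K by omega)]
      push_cast
      ring
    · have hi2 : (i : ℕ) < 2 * K := i.isLt
      rw [if_neg h, if_neg h, nn_cast (show (i : ℕ) - K + 1 ≤ K by omega)]
      push_cast
      ring
  -- ===================== Vandermonde =====================
  have hV : (∏ i : Fin (2 * K), ∏ j ∈ Finset.univ.filter (fun j : Fin (2 * K) => i < j),
        (x i - x j) ^ 2)
      = ((DelSq K lam * Xp K lam mu s) * DelSq K mu) := by
    rw [BCaux.fin_to_range (2 * K) (fun i j => (x i - x j) ^ 2) (fun a b => (Y a - Y b) ^ 2)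
      (fun i j => by simp only [hy i, hy j])]
    rw [BCaux.vandermonde_split K (fun a b => (Y a - Y b) ^ 2)
      (fun i t => ((nn K lam i : ℂ) - (nn K lam t : ℂ)) ^ 2)
      (fun i t => ((nn K lam i : ℂ) - (nn K mu t : ℂ) - s) ^ 2)
      (fun i t => ((nn K mu i : ℂ) - (nn K mu t : ℂ)) ^ 2) ?hAA ?hAB ?hBB]
    · rw [DelSq, DelSq, Xp]
    case hAA =>
      intro a b ha hb
      simp only [hY]
      simp only [if_pos ha, if_pos hb]
      ring
    case hAB =>
      intro a b ha hb
      simp only [hY]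
      simp only [if_pos ha, if_neg (show ¬ (K + b < K) by omega)]
      rw [show K + b - K + 1 = b + 1 by omega]
      rw [hs_def]
      ring
    case hBB =>
      intro a b ha hb
      simp only [hY]
      simp only [if_neg (show ¬ (K + a < K) by omega), if_neg (show ¬ (K + b < K) by omega)]
      rw [show K + a - K + 1 = a + 1 by omega, show K + b - K + 1 = b + 1 by omega]
      ring
  -- ===================== Gamma block =====================
  have hGs : Complex.Gamma s ≠ 0 := by
    apply Complex.Gamma_ne_zero
    intro m h
    apply hsZ (-(m : ℤ))
    rw [h]; push_cast; ring
  have hG1s : Complex.Gamma (1 - s) ≠ 0 := by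
    apply Complex.Gamma_ne_zero
    intro m h
    apply hsZ ((m : ℤ) + 1)
    push_cast
    linear_combination -h
  have hW : (∏ i : Fin (2 * K),
        1 / (Complex.Gamma (x i + 1 + σ) ^ 2 * Complex.Gamma (x i + 1 - σ) ^ 2))
      = ((Fl K lam * (Complex.Gamma (1 - s) ^ K * Gp K lam s)) ^ 2)⁻¹ *
        ((Fl K mu * (Complex.Gamma s ^ K * Hp K mu s)) ^ 2)⁻¹ := by
    rw [BCaux.fin_prod_to_range (2 * K)
      (fun i => 1 / (Complex.Gamma (x i + 1 + σ) ^ 2 * Complex.Gamma (x i + 1 - σ) ^ 2))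
      (fun a => 1 / (Complex.Gamma (Y a + 1 + σ) ^ 2 * Complex.Gamma (Y a + 1 - σ) ^ 2))
      (fun i => by simp only [hy i])]
    rw [BCaux.two_blocks K _
      (fun i => ((((nn K lam i).factorial : ℂ) *
        (Complex.Gamma (1 - s) * ∏ v ∈ range (nn K lam i), ((v : ℂ) + 1 - s))) ^ 2)⁻¹)
      (fun i => ((((nn K mu i).factorial : ℂ) *
        (Complex.Gamma s * ∏ v ∈ range (nn K mu i + 1), ((v : ℂ) + s))) ^ 2)⁻¹) ?hA ?hB]
    · -- blocks to normal form
      simp only [prod_inv_distrib, prod_pow, prod_mul_distrib, prod_const, Nat.card_Icc,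
        Nat.add_sub_cancel]
      rw [Fl, Gp, Fl, Hp]
    case hA =>
      intro a ha
      have hval : Y a = (nn K lam (a + 1) : ℂ) - σ := by simp only [hY, if_pos ha]
      have g1 : Complex.Gamma (Y a + 1 + σ) = ((nn K lam (a + 1)).factorial : ℂ) := by
        rw [hval, show (nn K lam (a + 1) : ℂ) - σ + 1 + σ = (nn K lam (a + 1) : ℂ) + 1 by ring,
          Complex.Gamma_nat_eq_factorial]
      have g2 : Complex.Gamma (Y a + 1 - σ)
          = Complex.Gamma (1 - s) * ∏ v ∈ range (nn K lam (a + 1)), ((v : ℂ) + 1 - s) := by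
        rw [hval, show (nn K lam (a + 1) : ℂ) - σ + 1 - σ = (1 - s) + (nn K lam (a + 1) : ℕ) by
          rw [hs_def]; push_cast; ring]
        rw [BCaux.Gamma_shift (1 - s) (nn K lam (a + 1)) ?_]
        · congr 1
          exact prod_congr rfl fun v _ => by ring
        · intro v _ h
          apply hsZ ((v : ℤ) + 1)
          push_cast
          linear_combination -h
      simp only [g1, g2, one_div]
      congr 1
      ring
    case hB =>
      intro a ha
      have hval : Y (K + a) = (nn K mu (a + 1) : ℂ) + σ := by
        simp only [hY, if_neg (show ¬ (K + a < K) by omega)]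
        rw [show K + a - K + 1 = a + 1 by omega]
      have g1 : Complex.Gamma (Y (K + a) + 1 - σ) = ((nn K mu (a + 1)).factorial : ℂ) := by
        rw [hval, show (nn K mu (a + 1) : ℂ) + σ + 1 - σ = (nn K mu (a + 1) : ℂ) + 1 by ring,
          Complex.Gamma_nat_eq_factorial]
      have g2 : Complex.Gamma (Y (K + a) + 1 + σ)
          = Complex.Gamma s * ∏ v ∈ range (nn K mu (a + 1) + 1), ((v : ℂ) + s) := by
        rw [hval, show (nn K mu (a + 1) : ℂ) + σ + 1 + σ = s + ((nn K mu (a + 1) + 1 : ℕ)) by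
          rw [hs_def]; push_cast; ring]
        rw [BCaux.Gamma_shift s (nn K mu (a + 1) + 1) ?_]
        · congr 1
          exact prod_congr rfl fun v _ => by ring
        · intro v _ h
          apply hsZ (-(v : ℤ))
          push_cast
          linear_combination h
      simp only [g1, g2, one_div]
      congr 1
      ring
  -- ===================== final algebra =====================
  rw [hLa, hLb, hV, hW]
  have hKEY := BCaux.KEY K lam mu hlam_mono hmu_mono s hsZ
  have hPl1 : Pl K lam ≠ 0 := BCaux.Pl_ne_zero hlam_mono
  have hPl2 : Pl K mu ≠ 0 := BCaux.Pl_ne_zero hmu_mono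
  have hTl1 : Tl K lam mu s ≠ 0 := BCaux.Tl_ne_zero s hsZ
  have hTl2 : Tl K mu lam (-s) ≠ 0 := BCaux.Tl_ne_zero (-s) hsZ'
  have hD1 : DelSq K lam ≠ 0 := BCaux.DelSq_ne_zero hlam_mono
  have hD2 : DelSq K mu ≠ 0 := BCaux.DelSq_ne_zero hmu_mono
  have hXne : Xp K lam mu s ≠ 0 := BCaux.Xp_ne_zero lam mu s hsZ
  have hF1 : Fl K lam ≠ 0 := BCaux.Fl_ne_zero
  have hF2 : Fl K mu ≠ 0 := BCaux.Fl_ne_zero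
  have h1 : ((Fl K lam * (Complex.Gamma (1 - s) ^ K * Gp K lam s)) ^ 2)⁻¹ *
      ((Fl K mu * (Complex.Gamma s ^ K * Hp K mu s)) ^ 2)⁻¹ =
      (Complex.Gamma (1 - s) ^ (2 * K))⁻¹ * (Complex.Gamma s ^ (2 * K))⁻¹ *
      ((Fl K lam * Gp K lam s * Hp K mu s * Fl K mu) ^ 2)⁻¹ := by
    rw [← mul_inv, ← mul_inv, ← mul_inv]
    congr 1
    rw [pow_mul, pow_mul]
    ring
  rw [h1, hKEY]
  have hV0 : (DelSq K lam * Xp K lam mu s) * DelSq K mu ≠ 0 :=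
    mul_ne_zero (mul_ne_zero hD1 hXne) hD2
  have hAB0 : Pl K lam * Tl K lam mu s * Pl K mu * Tl K mu lam (-s) ≠ 0 :=
    mul_ne_zero (mul_ne_zero (mul_ne_zero hPl1 hTl1) hPl2) hTl2
  field_simp
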